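/- Let R be a uniformly random subset of size n/8 of an n-element set (n divisible by 8), and let A be a fixed subset with |A| = k, where m − 2^d ≤ k ≤ m for integers m ≥ 1 and d ≥ 0. Then P[ |A ∩ R| < (m−2^d)/8 − √m/2 ] ≤ 1/3. -/

import Mathlib

open Finset


lemma count_superset {α : Type*} [DecidableEq α] (s B : Finset α) (hB : B ⊆ s) (r : ℕ)
    (ht : B.card ≤ r) :
    ((s.powersetCard r).filter (fun R => B ⊆ R)).card
      = (s.card - B.card).choose (r - B.card) := by
  rw [← Finset.card_sdiff_of_subset hB, ← Finset.card_powersetCard (r - B.card) (s \ B)]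
  apply Finset.card_bij' (fun R _ => R \ B) (fun S _ => S ∪ B)
  · intro R hR
    simp only [mem_filter, mem_powersetCard] at hR
    rw [mem_powersetCard]
    exact ⟨sdiff_subset_sdiff hR.1.1 le_rfl, by rw [card_sdiff_of_subset hR.2, hR.1.2]⟩
  · intro S hS
    rw [mem_powersetCard] at hS
    have hd : Disjoint S B := disjoint_of_subset_left hS.1 sdiff_disjoint
    simp only [mem_filter, mem_powersetCard]
    refine ⟨⟨union_subset (hS.1.trans (sdiff_subset)) hB, ?_⟩, subset_union_right⟩
    rw [card_union_of_disjoint hd, hS.2]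
    omega
  · intro R hR
    simp only [mem_filter] at hR
    exact sdiff_union_of_subset hR.2
  · intro S hS
    rw [mem_powersetCard] at hS
    exact union_sdiff_cancel_right (disjoint_of_subset_left hS.1 sdiff_disjoint)

lemma count_mem {α : Type*} [DecidableEq α] [Fintype α] (a : α) (r : ℕ) (hr : 1 ≤ r) :
    (((univ : Finset α).powersetCard r).filter (fun R => a ∈ R)).card
      = (Fintype.card α - 1).choose (r - 1) := by
  have := count_superset (univ : Finset α) {a} (subset_univ _) r (by simpa using hr)
  simpa using this

lemma count_mem2 {α : Type*} [DecidableEq α] [Fintype α] (a b : α) (hab : a ≠ b) (r : ℕ)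
    (hr : 2 ≤ r) :
    (((univ : Finset α).powersetCard r).filter (fun R => a ∈ R ∧ b ∈ R)).card
      = (Fintype.card α - 2).choose (r - 2) := by
  have hc : ({a, b} : Finset α).card = 2 := by rw [card_insert_of_notMem (by simpa using hab), card_singleton]
  have := count_superset (univ : Finset α) {a, b} (subset_univ _) r (by rw [hc]; exact hr)
  rw [hc] at this
  rw [← Finset.card_univ (α := α), ← this]
  congr 1
  ext R
  simp [insert_subset_iff]
lemma sum_card_inter {α : Type*} [DecidableEq α] [Fintype α] (A : Finset α) (r : ℕ) (hr : 1 ≤ r) :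
    ∑ R ∈ (univ : Finset α).powersetCard r, (A ∩ R).card
      = A.card * (Fintype.card α - 1).choose (r - 1) := by
  have key : ∀ R : Finset α, (A ∩ R).card = ∑ a ∈ A, if a ∈ R then 1 else 0 := fun R => by
    rw [← Finset.filter_mem_eq_inter, Finset.card_filter]
  simp_rw [key]
  rw [Finset.sum_comm]
  have : ∀ a ∈ A, (∑ R ∈ (univ : Finset α).powersetCard r, if a ∈ R then 1 else 0)
      = (Fintype.card α - 1).choose (r - 1) := by
    intro a _
    rw [← Finset.card_filter, count_mem a r hr]
  rw [Finset.sum_congr rfl this, Finset.sum_const, smul_eq_mul]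

lemma sum_sq_inter {α : Type*} [DecidableEq α] [Fintype α] (A : Finset α) (r : ℕ) (hr : 2 ≤ r) :
    ∑ R ∈ (univ : Finset α).powersetCard r, (A ∩ R).card ^ 2
      = A.card * (Fintype.card α - 1).choose (r - 1)
        + A.card * (A.card - 1) * (Fintype.card α - 2).choose (r - 2) := by
  have key : ∀ R : Finset α, (A ∩ R).card = ∑ a ∈ A, if a ∈ R then 1 else 0 := fun R => by
    rw [← Finset.filter_mem_eq_inter, Finset.card_filter]
  have key2 : ∀ R : Finset α, (A ∩ R).card ^ 2
      = ∑ a ∈ A, ∑ b ∈ A, if a ∈ R ∧ b ∈ R then 1 else 0 := by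
    intro R
    rw [sq, key, Finset.sum_mul_sum]
    refine Finset.sum_congr rfl fun a _ => Finset.sum_congr rfl fun b _ => ?_
    by_cases h1 : a ∈ R <;> by_cases h2 : b ∈ R <;> simp [h1, h2]
  simp_rw [key2]
  rw [Finset.sum_comm]
  have step1 : ∀ a ∈ A, (∑ R ∈ (univ : Finset α).powersetCard r, ∑ b ∈ A,
        if a ∈ R ∧ b ∈ R then 1 else 0)
      = (Fintype.card α - 1).choose (r - 1)
        + (A.card - 1) * (Fintype.card α - 2).choose (r - 2) := by
    intro a ha
    rw [Finset.sum_comm]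
    have inner : ∀ b ∈ A, (∑ R ∈ (univ : Finset α).powersetCard r,
          if a ∈ R ∧ b ∈ R then 1 else 0)
        = if a = b then (Fintype.card α - 1).choose (r - 1)
          else (Fintype.card α - 2).choose (r - 2) := by
      intro b _
      rw [← Finset.card_filter]
      by_cases hab : a = b
      · subst hab
        simp only [and_self, if_true]
        exact count_mem a r (by omega)
      · rw [if_neg hab]
        exact count_mem2 a b hab r hr
    rw [Finset.sum_congr rfl inner, ← Finset.add_sum_erase _ _ ha, if_pos rfl]
    congr 1
    have h2 : ∀ b ∈ A.erase a,
        (if a = b then (Fintype.card α - 1).choose (r - 1)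
          else (Fintype.card α - 2).choose (r - 2)) = (Fintype.card α - 2).choose (r - 2) :=
      fun b hb => if_neg (fun h => (Finset.mem_erase.mp hb).1 h.symm)
    rw [Finset.sum_congr rfl h2, Finset.sum_const, Finset.card_erase_of_mem ha, smul_eq_mul]
  rw [Finset.sum_congr rfl step1, Finset.sum_const, smul_eq_mul, mul_add, ← mul_assoc]



set_option maxHeartbeats 1000000 in
/-- Let `R` be a uniformly random subset of size `n/8` of an `n`-element set
(`8 ∣ n`), and let `A` be a fixed subset with `|A| = k`, where `m − 2^d ≤ k ≤ m` for
integers `m ≥ 1` and `d ≥ 0`. Then `P[|A ∩ R| < (m−2^d)/8 − √m/2] ≤ 1/3`, stated by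
counting: the number of bad subsets is at most a third of all size-`n/8` subsets. -/
theorem stmt9 (n m d k : ℕ) (hn8 : 8 ∣ n) (hn : 0 < n) (hm : 1 ≤ m)
    (A : Finset (Fin n)) (hA : A.card = k)
    (hk1 : (m : ℝ) - 2 ^ d ≤ (k : ℝ)) (hk2 : k ≤ m) :
    3 * (((Finset.univ : Finset (Fin n)).powersetCard (n / 8)).filter
        (fun R => ((A ∩ R).card : ℝ) < ((m : ℝ) - 2 ^ d) / 8 - Real.sqrt m / 2)).card
      ≤ ((Finset.univ : Finset (Fin n)).powersetCard (n / 8)).card := by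
  classical
  by_cases hθ : ((m : ℝ) - 2 ^ d) / 8 - Real.sqrt m / 2 ≤ 0
  · have hempty : (((Finset.univ : Finset (Fin n)).powersetCard (n / 8)).filter
        (fun R => ((A ∩ R).card : ℝ) < ((m : ℝ) - 2 ^ d) / 8 - Real.sqrt m / 2)) = ∅ := by
      refine Finset.filter_eq_empty_iff.mpr fun R _ => ?_
      exact not_lt.mpr (hθ.trans (Nat.cast_nonneg _))
    rw [hempty]
    simp
  push_neg at hθ
  set s : ℝ := Real.sqrt m with hsdef
  have hs : s * s = m := Real.mul_self_sqrt (Nat.cast_nonneg m)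
  have hs0 : 0 ≤ s := Real.sqrt_nonneg _
  -- k > 16
  have hsk : Real.sqrt k ≤ s := Real.sqrt_le_sqrt (by exact_mod_cast hk2)
  have hskk : Real.sqrt k * Real.sqrt k = k := Real.mul_self_sqrt (Nat.cast_nonneg k)
  have hsk0 : 0 ≤ Real.sqrt k := Real.sqrt_nonneg _
  have hk16 : (16 : ℝ) < k := by nlinarith
  have hk17 : 17 ≤ k := by
    have h16 : (16:ℕ) < k := by exact_mod_cast hk16
    omega
  have hkn : k ≤ n := by
    rw [← hA]
    simpa using Finset.card_le_univ A
  obtain ⟨t, hnt⟩ := hn8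
  have hn24 : 24 ≤ n := by omega
  set r := n / 8 with hrdef
  have hrn : n = 8 * r := by omega
  have hr3 : 3 ≤ r := by omega
  set N := n.choose r with hNdef
  set C1 := (n - 1).choose (r - 1) with hC1def
  set C2 := (n - 2).choose (r - 2) with hC2def
  set P := ((Finset.univ : Finset (Fin n)).powersetCard r) with hPdef
  have hcard : P.card = N := by
    rw [hPdef, Finset.card_powersetCard, card_univ, Fintype.card_fin]
  have hI1 : n * C1 = N * r := by
    have h := Nat.add_one_mul_choose_eq (n - 1) (r - 1)
    rw [show n - 1 + 1 = n by omega, show r - 1 + 1 = r by omega] at h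
    exact h
  have hI2 : (n - 1) * C2 = C1 * (r - 1) := by
    have h := Nat.add_one_mul_choose_eq (n - 2) (r - 2)
    rw [show n - 2 + 1 = n - 1 by omega, show r - 2 + 1 = r - 1 by omega] at h
    exact h
  have hS1 : ∑ R ∈ P, (A ∩ R).card = k * C1 := by
    rw [hPdef, sum_card_inter A r (by omega), Fintype.card_fin, hA]
  have hS2 : ∑ R ∈ P, (A ∩ R).card ^ 2 = k * C1 + k * (k - 1) * C2 := by
    rw [hPdef, sum_sq_inter A r (by omega), Fintype.card_fin, hA]
  set Bad := P.filter
      (fun R => ((A ∩ R).card : ℝ) < ((m : ℝ) - 2 ^ d) / 8 - Real.sqrt m / 2) with hBaddef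
  set c : ℝ := (k : ℝ) / 8 + 7 / 32 * s with hcdef
  -- lower bound per bad set
  have hbadmem : ∀ R ∈ Bad, (529 / 1024 : ℝ) * m ≤ (c - ((A ∩ R).card : ℝ)) ^ 2 := by
    intro R hR
    have hX : ((A ∩ R).card : ℝ) < ((m : ℝ) - 2 ^ d) / 8 - s / 2 := (Finset.mem_filter.mp hR).2
    have hXk : ((A ∩ R).card : ℝ) < (k : ℝ) / 8 - s / 2 := by
      refine hX.trans_le ?_
      have : ((m : ℝ) - 2 ^ d) / 8 ≤ (k : ℝ) / 8 := by linarith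
      linarith
    nlinarith [hs, hs0]
  have hlow : (Bad.card : ℝ) * (529 / 1024 * m) ≤ ∑ R ∈ P, (c - ((A ∩ R).card : ℝ)) ^ 2 := by
    calc (Bad.card : ℝ) * (529 / 1024 * m)
        ≤ ∑ R ∈ Bad, (c - ((A ∩ R).card : ℝ)) ^ 2 := by
          simpa [nsmul_eq_mul] using Finset.card_nsmul_le_sum Bad _ _ hbadmem
      _ ≤ ∑ R ∈ P, (c - ((A ∩ R).card : ℝ)) ^ 2 :=
          Finset.sum_le_sum_of_subset_of_nonneg (Finset.filter_subset _ _)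
            (fun R _ _ => sq_nonneg _)
  -- expansion of the sum of squares
  have hS1R : ∑ R ∈ P, ((A ∩ R).card : ℝ) = (k : ℝ) * C1 := by
    rw [← Nat.cast_sum, hS1]
    push_cast
    ring
  have hS2R : ∑ R ∈ P, ((A ∩ R).card : ℝ) ^ 2 = (k : ℝ) * C1 + (k : ℝ) * ((k : ℝ) - 1) * C2 := by
    have : ∑ R ∈ P, ((A ∩ R).card : ℝ) ^ 2 = ((∑ R ∈ P, (A ∩ R).card ^ 2 : ℕ) : ℝ) := by
      push_cast
      rfl
    rw [this, hS2]
    push_cast [Nat.cast_sub (show 1 ≤ k by omega)]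
    ring
  have hexp : ∑ R ∈ P, (c - ((A ∩ R).card : ℝ)) ^ 2
      = (N : ℝ) * c ^ 2 - 2 * c * ((k : ℝ) * C1)
        + ((k : ℝ) * C1 + (k : ℝ) * ((k : ℝ) - 1) * C2) := by
    calc ∑ R ∈ P, (c - ((A ∩ R).card : ℝ)) ^ 2
        = ∑ R ∈ P, (c ^ 2 - 2 * c * ((A ∩ R).card : ℝ) + ((A ∩ R).card : ℝ) ^ 2) :=
          Finset.sum_congr rfl fun R _ => by ring
      _ = (∑ _R ∈ P, c ^ 2) - 2 * c * (∑ R ∈ P, ((A ∩ R).card : ℝ))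
            + ∑ R ∈ P, ((A ∩ R).card : ℝ) ^ 2 := by
          rw [Finset.sum_add_distrib, Finset.sum_sub_distrib, Finset.mul_sum]
      _ = _ := by
          rw [Finset.sum_const, hcard, nsmul_eq_mul, hS1R, hS2R]
  -- choose identities over ℝ
  have rI1 : (n : ℝ) * C1 = (N : ℝ) * r := by exact_mod_cast hI1
  have rI2 : ((n : ℝ) - 1) * C2 = (C1 : ℝ) * ((r : ℝ) - 1) := by
    have h : ((n - 1 : ℕ) : ℝ) * C2 = (C1 : ℝ) * ((r - 1 : ℕ) : ℝ) := by exact_mod_cast hI2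
    rwa [Nat.cast_sub (by omega), Nat.cast_sub (by omega), Nat.cast_one] at h
  have hrR : (n : ℝ) = 8 * r := by exact_mod_cast hrn
  have hrpos : (0 : ℝ) < r := by
    have : (3 : ℝ) ≤ r := by exact_mod_cast hr3
    linarith
  have hNC1 : (C1 : ℝ) = N / 8 := by
    have h8 : (8 : ℝ) * r * C1 = (N : ℝ) * r := by rw [← hrR]; exact rI1
    have h9 : ((8 : ℝ) * C1) * r = (N : ℝ) * r := by linear_combination h8
    have h10 := mul_right_cancel₀ (ne_of_gt hrpos) h9
    linarith
  have hkR1 : (1 : ℝ) ≤ k := by exact_mod_cast (by omega : 1 ≤ k)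
  have hkmR : (k : ℝ) ≤ m := by exact_mod_cast hk2
  have hknR : (k : ℝ) ≤ n := by exact_mod_cast hkn
  have hN0 : (0 : ℝ) ≤ N := Nat.cast_nonneg _
  have hC20 : (0 : ℝ) ≤ C2 := Nat.cast_nonneg _
  -- variance-type bound
  have hvar : (k : ℝ) * ((k : ℝ) - 1) * C2
      ≤ (N : ℝ) * (7 / 64 * m + (k : ℝ) ^ 2 / 64 - (k : ℝ) / 8) := by
    have hn1 : (0 : ℝ) < (n : ℝ) - 1 := by nlinarith
    rw [← mul_le_mul_iff_of_pos_right hn1]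
    have lhs_eq : (k : ℝ) * ((k : ℝ) - 1) * C2 * ((n : ℝ) - 1)
        = (k : ℝ) * ((k : ℝ) - 1) * ((C1 : ℝ) * ((r : ℝ) - 1)) := by
      rw [← rI2]; ring
    rw [lhs_eq, hNC1, hrR]
    have h1 : (0 : ℝ) ≤ (N : ℝ) * (((m : ℝ) - k) * (8 * (r : ℝ) - 1)) :=
      mul_nonneg hN0 (mul_nonneg (sub_nonneg.mpr hkmR) (by linarith))
    have h2 : (0 : ℝ) ≤ (N : ℝ) * ((k : ℝ) * ((k : ℝ) - 1)) :=
      mul_nonneg hN0 (mul_nonneg (by linarith) (sub_nonneg.mpr hkR1))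
    linarith [h1, h2]
  -- upper bound on the sum of squares
  have hTub : ∑ R ∈ P, (c - ((A ∩ R).card : ℝ)) ^ 2 ≤ (N : ℝ) * (161 / 1024 * m) := by
    rw [hexp, hNC1, hcdef]
    have hsm2 : (N : ℝ) * (s * s) = (N : ℝ) * m := by rw [hs]
    linarith [hvar, hsm2]
  -- conclude
  have hfinal : (3 : ℝ) * Bad.card ≤ (N : ℝ) := by
    have hm1 : (1 : ℝ) ≤ m := by exact_mod_cast hm
    have hB0 : (0 : ℝ) ≤ Bad.card := Nat.cast_nonneg _
    nlinarith [hlow.trans hTub]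
  rw [hcard]
  exact_mod_cast hfinal
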